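/- Let μ₁, μ₂ > 0 and β > 0, and define H(x,y) = (μ₁/2)(e^{x²} - 1 - x²) + (μ₂/2)(e^{y²} - 1 - y²) + β(e^{|xy|} - 1 - |xy|). Then for every (x,y) ∈ ℝ² \ {(0,0)}, x·∂H/∂x(x,y) + y·∂H/∂y(x,y) ≥ 4 H(x,y) > 0. -/

import Mathlib

lemma key_ar (t : ℝ) (ht : 0 ≤ t) : 2 * (Real.exp t - 1 - t) ≤ t * (Real.exp t - 1) := by
  have hg : ∀ s : ℝ, 0 ≤ (s - 1) * Real.exp s + 1 := by
    intro s
    have h1 : 1 - s ≤ Real.exp (-s) := by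
      have := Real.add_one_le_exp (-s); linarith
    have hpos := Real.exp_pos s
    have h2 : (1 - s) * Real.exp s ≤ Real.exp (-s) * Real.exp s :=
      mul_le_mul_of_nonneg_right h1 hpos.le
    rw [← Real.exp_add, neg_add_cancel, Real.exp_zero] at h2
    nlinarith
  have hderiv : ∀ s : ℝ, HasDerivAt (fun u => u * Real.exp u + u - 2 * Real.exp u + 2)
      ((s - 1) * Real.exp s + 1) s := by
    intro s
    have h1 : HasDerivAt (fun u : ℝ => u * Real.exp u) (1 * Real.exp s + s * Real.exp s) s :=
      (hasDerivAt_id s).mul (Real.hasDerivAt_exp s)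
    have h2 := ((h1.add (hasDerivAt_id s)).sub ((Real.hasDerivAt_exp s).const_mul 2)).add_const 2
    exact h2.congr_deriv (by ring)
  have hmono : MonotoneOn (fun u => u * Real.exp u + u - 2 * Real.exp u + 2) (Set.Ici 0) := by
    apply monotoneOn_of_deriv_nonneg (convex_Ici 0)
    · exact Continuous.continuousOn (by continuity)
    · intro s _; exact (hderiv s).differentiableAt.differentiableWithinAt
    · intro s _; rw [(hderiv s).deriv]; exact hg s
  have h0 := hmono Set.self_mem_Ici (Set.mem_Ici.mpr ht) ht
  simp only [Real.exp_zero] at h0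
  nlinarith [h0]

theorem stmt_6 (μ₁ μ₂ β : ℝ) (hμ₁ : 0 < μ₁) (hμ₂ : 0 < μ₂) (hβ : 0 < β)
    (H : ℝ → ℝ → ℝ)
    (hH : ∀ x y : ℝ, H x y =
      μ₁ / 2 * (Real.exp (x ^ 2) - 1 - x ^ 2) +
      μ₂ / 2 * (Real.exp (y ^ 2) - 1 - y ^ 2) +
      β * (Real.exp |x * y| - 1 - |x * y|))
    (x y : ℝ) (hxy : (x, y) ≠ (0, 0)) :
    (μ₁ * x ^ 2 * (Real.exp (x ^ 2) - 1) + β * |x * y| * (Real.exp |x * y| - 1)) +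
      (μ₂ * y ^ 2 * (Real.exp (y ^ 2) - 1) + β * |x * y| * (Real.exp |x * y| - 1)) ≥
        4 * H x y ∧ 0 < H x y := by
  have hk1 := key_ar (x ^ 2) (sq_nonneg x)
  have hk2 := key_ar (y ^ 2) (sq_nonneg y)
  have hk3 := key_ar |x * y| (abs_nonneg _)
  have hn1 : 0 ≤ Real.exp (x ^ 2) - 1 - x ^ 2 := by
    have := Real.add_one_le_exp (x ^ 2); linarith
  have hn2 : 0 ≤ Real.exp (y ^ 2) - 1 - y ^ 2 := by
    have := Real.add_one_le_exp (y ^ 2); linarith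
  have hn3 : 0 ≤ Real.exp |x * y| - 1 - |x * y| := by
    have := Real.add_one_le_exp |x * y|; linarith
  have hne : x ≠ 0 ∨ y ≠ 0 := by
    by_contra h
    push_neg at h
    exact hxy (by simp [h.1, h.2])
  have hpos : 0 < H x y := by
    rw [hH]
    rcases hne with hx | hy
    · have hx2 : x ^ 2 ≠ 0 := pow_ne_zero 2 hx
      have := Real.add_one_lt_exp hx2
      nlinarith
    · have hy2 : y ^ 2 ≠ 0 := pow_ne_zero 2 hy
      have := Real.add_one_lt_exp hy2
      nlinarith
  refine ⟨?_, hpos⟩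
  rw [hH]
  nlinarith [mul_le_mul_of_nonneg_left hk1 hμ₁.le, mul_le_mul_of_nonneg_left hk2 hμ₂.le,
    mul_le_mul_of_nonneg_left hk3 hβ.le]
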